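/- Let D ⊆ D' be an extension of integral domains with quotient fields K ⊆ K' respectively, such that D' ∩ K = D (intersection taken inside K'). Let p ∈ D[X] be monic, let d ∈ D, and let g ∈ D[X]. If g lies in the ideal dD'[X] + pD'[X] of D'[X], then g lies in the ideal dD[X] + pD[X] of D[X]. Equivalently, dD[X] + p(X)D[X] = (dD'[X] + p(X)D'[X]) ∩ D[X]. -/

import Mathlib

open Polynomial

/-- Let `D ⊆ D'` be an extension of domains with quotient fields `K ⊆ K'`
respectively, such that `D' ∩ K = D` (inside `K'`).  Let `p ∈ D[X]` be monic, `d ∈ D` and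
`g ∈ D[X]`.  If `g` lies in the ideal `dD'[X] + pD'[X]` of `D'[X]`, then `g` lies in the ideal
`dD[X] + pD[X]` of `D[X]`; equivalently,
`dD[X] + pD[X] = (dD'[X] + pD'[X]) ∩ D[X]`. -/
theorem span_d_p_contracted (D D' K K' : Type*) [CommRing D] [IsDomain D]
    [CommRing D'] [IsDomain D'] [Field K] [Field K']
    [Algebra D K] [IsFractionRing D K] [Algebra D' K'] [IsFractionRing D' K']
    [Algebra D D'] [Algebra K K'] [Algebra D K']
    [IsScalarTower D D' K'] [IsScalarTower D K K']
    (hcap : ∀ x : K', (∃ y : D', algebraMap D' K' y = x) → (∃ z : K, algebraMap K K' z = x) →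
      ∃ w : D, algebraMap D K' w = x)
    (p : D[X]) (hp : p.Monic) (d : D) :
    (∀ g : D[X],
      g.map (algebraMap D D') ∈
        Ideal.span {Polynomial.C (algebraMap D D' d), p.map (algebraMap D D')} →
      g ∈ Ideal.span {Polynomial.C d, p}) ∧
    Ideal.span {Polynomial.C d, p} =
      Ideal.comap (Polynomial.mapRingHom (algebraMap D D'))
        (Ideal.span {Polynomial.C (algebraMap D D' d), p.map (algebraMap D D')}) := by
  have hDK' : Function.Injective (algebraMap D K') := by
    rw [IsScalarTower.algebraMap_eq D K K']
    exact (algebraMap K K').injective.comp (IsFractionRing.injective D K)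
  have hφ : Function.Injective (algebraMap D D') := by
    have h := hDK'
    rw [IsScalarTower.algebraMap_eq D D' K'] at h
    exact Function.Injective.of_comp h
  set φ := algebraMap D D' with hφdef
  have main : ∀ g : D[X], g.map φ ∈
      Ideal.span {Polynomial.C (φ d), p.map φ} →
      g ∈ Ideal.span {Polynomial.C d, p} := by
    intro g hg
    have hdiv : g %ₘ p + p * (g /ₘ p) = g := g.modByMonic_add_div p
    set r := g %ₘ p with hrdef
    suffices hrmem : r ∈ Ideal.span {Polynomial.C d, p} by
      have hpmem : p * (g /ₘ p) ∈ Ideal.span {Polynomial.C d, p} :=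
        Ideal.mul_mem_right _ _ (Ideal.subset_span (by simp))
      rw [← hdiv]
      exact Ideal.add_mem _ hrmem hpmem
    have hrmap : r.map φ ∈ Ideal.span {Polynomial.C (φ d), p.map φ} := by
      have heq : r.map φ = g.map φ - (p.map φ) * ((g /ₘ p).map φ) := by
        rw [← Polynomial.map_mul, ← Polynomial.map_sub]
        congr 1
        linear_combination hdiv
      rw [heq]
      exact Ideal.sub_mem _ hg
        (Ideal.mul_mem_right _ _ (Ideal.subset_span (by simp)))
    obtain ⟨a, b, hab⟩ := Ideal.mem_span_pair.mp hrmap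
    set q := p.map φ with hqdef
    have hq : q.Monic := hp.map φ
    have hdeg_r : (r.map φ).degree < q.degree := by
      calc (r.map φ).degree ≤ r.degree := Polynomial.degree_map_le
        _ < p.degree := Polynomial.degree_modByMonic_lt g hp
        _ = q.degree := (hp.degree_map φ).symm
    set t := a %ₘ q with htdef
    have hdeg_t : t.degree < q.degree := Polynomial.degree_modByMonic_lt a hq
    have hc0 : b + Polynomial.C (φ d) * (a /ₘ q) = 0 := by
      by_contra hc
      have hadiv : a %ₘ q + q * (a /ₘ q) = a := a.modByMonic_add_div q
      have heq : (b + Polynomial.C (φ d) * (a /ₘ q)) * q =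
          r.map φ - t * Polynomial.C (φ d) := by
        linear_combination hab + Polynomial.C (φ d) * hadiv
      have hlt : ((b + Polynomial.C (φ d) * (a /ₘ q)) * q).degree < q.degree := by
        rw [heq]
        refine (Polynomial.degree_sub_le _ _).trans_lt (max_lt hdeg_r ?_)
        calc (t * Polynomial.C (φ d)).degree ≤ t.degree + (Polynomial.C (φ d)).degree :=
              Polynomial.degree_mul_le _ _
          _ ≤ t.degree + 0 := add_le_add_right Polynomial.degree_C_le _
          _ = t.degree := by rw [add_zero]
          _ < q.degree := hdeg_t
      rw [hq.degree_mul] at hlt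
      have : (0 : WithBot ℕ) ≤ (b + Polynomial.C (φ d) * (a /ₘ q)).degree :=
        Polynomial.zero_le_degree_iff.mpr hc
      have h2 : q.degree ≤ (b + Polynomial.C (φ d) * (a /ₘ q)).degree + q.degree := by
        nth_rewrite 1 [← zero_add q.degree]
        exact add_le_add_left this _
      exact absurd hlt (not_lt.mpr h2)
    have hr_eq : r.map φ = t * Polynomial.C (φ d) := by
      have hadiv : a %ₘ q + q * (a /ₘ q) = a := a.modByMonic_add_div q
      linear_combination -hab - Polynomial.C (φ d) * hadiv + q * hc0
    have hcoeff : ∀ i, φ (r.coeff i) = t.coeff i * φ d := by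
      intro i
      have := congrArg (fun f => f.coeff i) hr_eq
      simpa [Polynomial.coeff_map, Polynomial.coeff_mul_C] using this
    have hdvd : ∀ i, d ∣ r.coeff i := by
      intro i
      rcases eq_or_ne d 0 with h0 | h0
      · subst h0
        have hz : φ (r.coeff i) = φ 0 := by simp [hcoeff i]
        have : r.coeff i = 0 := hφ hz
        simp [this]
      · have hdK : algebraMap D K d ≠ 0 := fun h => h0 (IsFractionRing.injective D K (h.trans (map_zero _).symm))
        have hdK' : algebraMap D K' d ≠ 0 := fun h => h0 (hDK' (h.trans (map_zero _).symm))
        set x : K' := algebraMap D' K' (t.coeff i) with hxdef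
        have hkey : algebraMap D K' (r.coeff i) = x * algebraMap D K' d := by
          rw [IsScalarTower.algebraMap_apply D D' K', hcoeff i, map_mul, hxdef,
            ← IsScalarTower.algebraMap_apply D D' K']
        obtain ⟨w, hw⟩ := hcap x ⟨_, rfl⟩
          ⟨algebraMap D K (r.coeff i) / algebraMap D K d, by
            rw [map_div₀, div_eq_iff
              (fun h => hdK ((algebraMap K K').injective (h.trans (map_zero _).symm)))]
            rw [← IsScalarTower.algebraMap_apply D K K', ← IsScalarTower.algebraMap_apply D K K']
            exact hkey⟩
        refine ⟨w, hDK' ?_⟩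
        rw [map_mul, hw, mul_comm, hkey]
    have hCdvd : Polynomial.C d ∣ r := (Polynomial.C_dvd_iff_dvd_coeff d r).mpr hdvd
    obtain ⟨s, hs⟩ := hCdvd
    exact Ideal.mem_span_pair.mpr ⟨s, 0, by rw [hs]; ring⟩
  refine ⟨main, le_antisymm ?_ ?_⟩
  · rw [Ideal.span_le]
    rintro x hx
    simp only [Set.mem_insert_iff, Set.mem_singleton_iff] at hx
    simp only [SetLike.mem_coe, Ideal.mem_comap, Polynomial.coe_mapRingHom]
    rcases hx with rfl | rfl
    · rw [Polynomial.map_C]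
      exact Ideal.subset_span (by simp)
    · exact Ideal.subset_span (by simp)
  · intro g hg
    exact main g (by simpa using hg)
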